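/- arXiv:2001.10435 — 2 statements merged into one kernel-verified Lean document; each statement's English description precedes it below -/
import Mathlib

section
/- Let a be a word with Lyndon factorization a = p₁^{n₁} ⋯ p_s^{n_s} where p₁ < ⋯ < p_s are Lyndon words of lengths l₁,...,l_s, and let w be an (l₁,...,l₁,l₂,...,l_s)-shuffle permutation (each block repeated nᵢ times) of the positions of a. Then the word obtained by applying w to the letters of a is lexicographically greater than or equal to a. -/
/-- Lexicographic strict order on words, with the convention that a word is
strictly greater than each of its proper prefixes (i.e. `a ++ b < a`). -/
def wlt {X : Type*} [LinearOrder X] : List X → List X → Prop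
  | [], _ => False
  | _ :: _, [] => True
  | x :: xs, y :: ys => x < y ∨ (x = y ∧ wlt xs ys)

/-- A nonempty word `p` is a Lyndon word if every proper nonempty suffix of `p`
is strictly less than `p`. -/
def IsLyndon {X : Type*} [LinearOrder X] (p : List X) : Prop :=
  p ≠ [] ∧ ∀ u v : List X, u ≠ [] → v ≠ [] → p = u ++ v → wlt v p

/-- `w` is an `(m₁,…,m_r)`-shuffle (block sizes given by the list `l`):
it is strictly increasing on each of the consecutive blocks of sizes `m₁,…,m_r`. -/
def IsShuffle (l : List ℕ) {n : ℕ} (w : Equiv.Perm (Fin n)) : Prop :=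
  ∀ (b : ℕ) (i j : Fin n), (l.take b).sum ≤ (i : ℕ) → (i : ℕ) < (j : ℕ) →
    (j : ℕ) < (l.take (b + 1)).sum → w i < w j

section Aux
variable {X : Type*} [LinearOrder X]

theorem wlt_nil (v : List X) : ¬ wlt [] v := fun h => h

theorem wlt_cons_nil (x : X) (u : List X) : wlt (x :: u) [] := trivial

theorem wlt_cons_iff {x y : X} {u v : List X} :
    wlt (x :: u) (y :: v) ↔ x < y ∨ (x = y ∧ wlt u v) := Iff.rfl

theorem wlt_irrefl : ∀ u : List X, ¬ wlt u u
  | [] => fun h => h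
  | x :: u => fun h => by
      rcases h with h | ⟨_, h⟩
      · exact absurd h (lt_irrefl x)
      · exact wlt_irrefl u h

theorem wlt_trans : ∀ u v w : List X, wlt u v → wlt v w → wlt u w
  | [], _, _, h, _ => absurd h (wlt_nil _)
  | _ :: _, [], _, _, h2 => absurd h2 (wlt_nil _)
  | _ :: _, _ :: _, [], _, _ => trivial
  | x :: u, y :: v, z :: w, h1, h2 => by
      rcases h1 with h1 | ⟨rfl, h1⟩
      · rcases h2 with h2 | ⟨rfl, h2⟩
        · exact Or.inl (lt_trans h1 h2)
        · exact Or.inl h1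
      · rcases h2 with h2 | ⟨rfl, h2⟩
        · exact Or.inl h2
        · exact Or.inr ⟨rfl, wlt_trans u v w h1 h2⟩

theorem wlt_trichotomy : ∀ u v : List X, wlt u v ∨ u = v ∨ wlt v u
  | [], [] => Or.inr (Or.inl rfl)
  | [], _ :: _ => Or.inr (Or.inr trivial)
  | _ :: _, [] => Or.inl trivial
  | x :: u, y :: v => by
      rcases lt_trichotomy x y with h | rfl | h
      · exact Or.inl (Or.inl h)
      · rcases wlt_trichotomy u v with h | rfl | h
        · exact Or.inl (Or.inr ⟨rfl, h⟩)
        · exact Or.inr (Or.inl rfl)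
        · exact Or.inr (Or.inr (Or.inr ⟨rfl, h⟩))
      · exact Or.inr (Or.inr (Or.inl h))

/-- `u ≤ v` for the strict total order `wlt`. -/
def wle (u v : List X) : Prop := ¬ wlt v u

theorem wle_refl (u : List X) : wle u u := wlt_irrefl u

theorem wle_of_wlt {u v : List X} (h : wlt u v) : wle u v :=
  fun h' => wlt_irrefl u (wlt_trans _ _ _ h h')

theorem wle_trans {u v w : List X} (h1 : wle u v) (h2 : wle v w) : wle u w := by
  intro h
  rcases wlt_trichotomy u v with h' | rfl | h'
  · exact h2 (wlt_trans _ _ _ h h')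
  · exact h2 h
  · exact h1 h'

theorem wle_nil (v : List X) : wle v [] := wlt_nil v

theorem wle_cons {x : X} {u v : List X} (h : wle u v) : wle (x :: u) (x :: v) := by
  intro h'
  rcases h' with h' | ⟨_, h'⟩
  · exact lt_irrefl x h'
  · exact h h'

theorem wle_cons_inv {x : X} {u v : List X} (h : wle (x :: u) (x :: v)) : wle u v :=
  fun h' => h (Or.inr ⟨rfl, h'⟩)

theorem wle_head {x y : X} {u v : List X} (h : wle (x :: u) (y :: v)) : x ≤ y :=
  not_lt.mp fun hlt => h (Or.inl hlt)

theorem wle_append_left : ∀ (q : List X) {u v : List X}, wle (q ++ u) (q ++ v) ↔ wle u v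
  | [], u, v => Iff.rfl
  | a :: q, u, v => by
      constructor
      · intro h
        exact (wle_append_left q).mp (wle_cons_inv h)
      · intro h
        exact wle_cons ((wle_append_left q).mpr h)

theorem wle_of_suffix {v L : List X} (hL : IsLyndon L) (hs : v <:+ L) (hv : v ≠ []) :
    wle v L := by
  obtain ⟨u, rfl⟩ := hs
  cases u with
  | nil => exact wle_refl _
  | cons a u => exact wle_of_wlt (hL.2 (a :: u) v (by simp) hv rfl)

instance : IsTrans (List X) wlt := ⟨fun a b c => wlt_trans a b c⟩
instance : IsTrans (List X) wle := ⟨fun _ _ _ => wle_trans⟩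

/-- `Ilv U s` : `s` is an interleaving (shuffle) of the words in `U`. -/
inductive Ilv : List (List X) → List X → Prop
  | nil {U : List (List X)} : (∀ u ∈ U, u = []) → Ilv U []
  | cons {U : List (List X)} {c : ℕ} {x : X} {xs : List X} {s : List X} :
      U[c]? = some (x :: xs) → Ilv (U.set c xs) s → Ilv U (x :: s)

theorem memget {α : Type*} {l : List α} {n : ℕ} {a : α} (h : l[n]? = some a) : a ∈ l := by
  rw [List.getElem?_eq_some_iff] at h; obtain ⟨hl, rfl⟩ := h; exact List.getElem_mem hl

theorem setself {α : Type*} : ∀ (l : List α) (n : ℕ) (a : α), l[n]? = some a → l.set n a = l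
  | [], n, a, h => by simp at h
  | b :: l, 0, a, h => by simp_all
  | b :: l, n+1, a, h => by simp at h ⊢; exact setself l n a h

omit [LinearOrder X] in
theorem ilv_cons_nil {U : List (List X)} {s : List X} (h : Ilv U s) : Ilv ([] :: U) s := by
  induction h with
  | nil h => exact Ilv.nil (by intro u hu; cases hu with
      | head => rfl
      | tail _ hu => exact h _ hu)
  | @cons U c x xs s hg _ ih =>
      exact Ilv.cons (c := c + 1) (by simpa using hg) (by simpa using ih)

omit [LinearOrder X] in
theorem ilv_flatten : ∀ (U : List (List X)), Ilv U U.flatten := by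
  intro U
  induction U with
  | nil => exact Ilv.nil (by simp)
  | cons u U ih =>
      induction u with
      | nil => simpa using ilv_cons_nil ih
      | cons x xs ihx =>
          refine Ilv.cons (c := 0) (x := x) (xs := xs) (by simp) ?_
          simpa using ihx

omit [LinearOrder X] in
theorem ilv_nil_inv {U : List (List X)} (h : Ilv U []) : ∀ u ∈ U, u = [] := by
  cases h with | nil h => exact h

theorem exch : ∀ (σ : List X) (W : List (List X)) (b c : ℕ) (q e d : List X),
    b ≠ c → W[b]? = some (q ++ e) → W[c]? = some d →
    wle (q ++ e) (q ++ d) → Ilv W σ →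
    ∃ τ, Ilv ((W.set b e).set c (q ++ d)) τ ∧ wle τ σ := by
  intro σ
  induction σ with
  | nil =>
      intro W b c q e d hbc hb hc _ hIlv
      have hall := ilv_nil_inv hIlv
      have hqe : q ++ e = [] := hall _ (memget hb)
      have hd : d = [] := hall _ (memget hc)
      rcases List.append_eq_nil_iff.mp hqe with ⟨rfl, rfl⟩
      subst hd
      refine ⟨[], Ilv.nil ?_, wle_refl _⟩
      intro u hu
      rcases List.mem_or_eq_of_mem_set hu with hu | rfl
      · rcases List.mem_or_eq_of_mem_set hu with hu | rfl
        · exact hall _ hu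
        · rfl
      · rfl
  | cons z σ₀ IH =>
      intro W b c q e d hbc hb hc hle hIlv
      have hblt : b < W.length := (List.getElem?_eq_some_iff.mp hb).1
      have hclt : c < W.length := (List.getElem?_eq_some_iff.mp hc).1
      cases q with
      | nil =>
          simp only [List.nil_append] at hb hle ⊢
          rw [setself _ _ _ hb, setself _ _ _ hc]
          exact ⟨z :: σ₀, hIlv, wle_refl _⟩
      | cons q₀ q' =>
      cases hIlv with
      | @cons _ a x' zs s' hga h₀ =>
        rcases eq_or_ne a b with hab | hab
        · -- the step took from coordinate b
          cases hab
          rw [hb] at hga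
          rw [List.cons_append] at hga
          injection hga with hga
          injection hga with hz hzs
          cases hz; cases hzs
          have h1 : (W.set b (q' ++ e))[b]? = some (q' ++ e) :=
            List.getElem?_set_self (by simpa using hblt)
          have h2 : (W.set b (q' ++ e))[c]? = some d := by
            rw [List.getElem?_set_ne hbc]; exact hc
          have h3 : wle (q' ++ e) (q' ++ d) := by
            have h := hle
            rw [List.cons_append, List.cons_append] at h
            exact wle_cons_inv h
          obtain ⟨τ₀, hτ₀, hτle⟩ := IH (W.set b (q' ++ e)) b c q' e d hbc h1 h2 h3 h₀
          rw [List.set_set] at hτ₀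
          refine ⟨z :: τ₀, ?_, wle_cons hτle⟩
          refine Ilv.cons (c := c) (x := z) (xs := q' ++ d) ?_ ?_
          · rw [List.getElem?_set_self (by simpa using hclt)]
            rfl
          · rw [List.set_set]
            exact hτ₀
        · rcases eq_or_ne a c with hac | hac
          · -- the step took from coordinate c
            cases hac
            rw [hc] at hga
            injection hga with hga
            subst hga
            have hstrip : wle e (z :: zs) := (wle_append_left (q₀ :: q')).mp hle
            cases e with
            | nil => exact absurd (wlt_cons_nil z zs) hstrip
            | cons he e' =>
              rcases (wle_head hstrip).lt_or_eq with hlt | heq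
              · refine ⟨_, Ilv.cons (x := he) (xs := e') (c := b) ?_ (ilv_flatten _),
                  wle_of_wlt (Or.inl hlt)⟩
                rw [List.getElem?_set_ne (Ne.symm hbc), List.getElem?_set_self (by simpa using hblt)]
              · cases heq
                have h1 : (W.set c zs)[b]? = some (((q₀ :: q') ++ [z]) ++ e') := by
                  rw [List.getElem?_set_ne (Ne.symm hbc), ← List.append_cons]
                  exact hb
                have h2 : (W.set c zs)[c]? = some zs :=
                  List.getElem?_set_self (by simpa using hclt)
                have h3 : wle (((q₀ :: q') ++ [z]) ++ e') (((q₀ :: q') ++ [z]) ++ zs) := by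
                  rw [← List.append_cons, ← List.append_cons]
                  exact hle
                obtain ⟨τ₀, hτ₀, hτle⟩ := IH (W.set c zs) b c ((q₀ :: q') ++ [z]) e' zs hbc h1 h2 h3 h₀
                rw [List.set_comm _ _ (Ne.symm hbc), List.set_set, ← List.append_cons] at hτ₀
                refine ⟨z :: τ₀, ?_, wle_cons hτle⟩
                refine Ilv.cons (c := b) (x := z) (xs := e') ?_ ?_
                · rw [List.getElem?_set_ne (Ne.symm hbc), List.getElem?_set_self (by simpa using hblt)]
                · rw [List.set_comm _ _ hbc, List.set_set]
                  rw [List.set_comm _ _ hbc] at hτ₀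
                  exact hτ₀
          · -- the step took from an unrelated coordinate
            have h1 : (W.set a zs)[b]? = some ((q₀ :: q') ++ e) := by
              rw [List.getElem?_set_ne hab]; exact hb
            have h2 : (W.set a zs)[c]? = some d := by
              rw [List.getElem?_set_ne hac]; exact hc
            obtain ⟨τ₀, hτ₀, hτle⟩ := IH (W.set a zs) b c (q₀ :: q') e d hbc h1 h2 hle h₀
            refine ⟨z :: τ₀, ?_, wle_cons hτle⟩
            refine Ilv.cons (c := a) (x := z) (xs := zs) ?_ ?_
            · rw [List.getElem?_set_ne (Ne.symm hac), List.getElem?_set_ne (Ne.symm hab)]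
              exact hga
            · rw [List.set_comm _ _ (Ne.symm hac), List.set_comm _ _ (Ne.symm hab)]
              exact hτ₀
/-- A greedy trace: always consume from a block that is `wle`-minimal. -/
inductive GMin : List (List X) → List X → Prop
  | nil {U : List (List X)} : (∀ u ∈ U, u = []) → GMin U []
  | cons {U : List (List X)} {c : ℕ} {x : X} {xs : List X} {s : List X} :
      U[c]? = some (x :: xs) → (∀ u ∈ U, wle (x :: xs) u) →
      GMin (U.set c xs) s → GMin U (x :: s)

theorem gmin_le {U : List (List X)} {w : List X} (hw : GMin U w) :
    ∀ σ, Ilv U σ → wle w σ := by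
  induction hw with
  | nil h =>
      intro σ hσ
      cases hσ with
      | nil _ => exact wle_refl []
      | cons hg _ => exact absurd (h _ (memget hg)) (by simp)
  | @cons U c x xs s hget hmin hw' ih =>
      intro σ hσ
      cases hσ with
      | nil hemp => exact absurd (hemp _ (memget hget)) (by simp)
      | @cons _ a z zs s' hga h₀ =>
        have hle := hmin _ (memget hga)
        rcases (wle_head hle).lt_or_eq with hlt | heq
        · exact wle_of_wlt (Or.inl hlt)
        · cases heq
          rcases eq_or_ne a c with hac | hac
          · cases hac
            rw [hget] at hga
            injection hga with hga
            injection hga with _ hzs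
            cases hzs
            exact wle_cons (ih _ h₀)
          · have halt : a < U.length := (List.getElem?_eq_some_iff.mp hga).1
            have h1 : (U.set a zs)[c]? = some ([x] ++ xs) := by
              rw [List.getElem?_set_ne hac]; exact hget
            have h2 : (U.set a zs)[a]? = some zs :=
              List.getElem?_set_self (by simpa using halt)
            have h3 : wle ([x] ++ xs) ([x] ++ zs) := hle
            obtain ⟨τ, hτ, hτle⟩ := exch s' (U.set a zs) c a [x] xs zs (Ne.symm hac) h1 h2 h3 h₀
            rw [List.set_comm _ _ (Ne.symm hac), List.set_set, List.set_comm _ _ hac] at hτ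
            have hstate : (U.set c xs).set a ([x] ++ zs) = U.set c xs := by
              apply setself
              rw [List.getElem?_set_ne (Ne.symm hac)]; exact hga
            rw [hstate] at hτ
            exact wle_cons (wle_trans (ih _ hτ) hτle)
omit [LinearOrder X] in
theorem getk : ∀ (k : ℕ) (v : List X) (A : List (List X)),
    (List.replicate k ([] : List X) ++ v :: A)[k]? = some v
  | 0, v, A => by simp
  | k+1, v, A => by simpa using getk k v A

omit [LinearOrder X] in
theorem setk : ∀ (k : ℕ) (v v' : List X) (A : List (List X)),
    (List.replicate k ([] : List X) ++ v :: A).set k v' =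
      List.replicate k ([] : List X) ++ v' :: A
  | 0, v, v', A => rfl
  | k+1, v, v', A => by simpa using setk k v v' A

theorem gmflat : ∀ (v L : List X) (A : List (List X)) (k : ℕ),
    IsLyndon L → v <:+ L → (∀ p ∈ A, IsLyndon p) → A.Pairwise wle →
    (∀ p ∈ A, wle L p) →
    GMin (List.replicate k ([] : List X) ++ v :: A) (v ++ A.flatten)
  | x :: v', L, A, k, hL, hsuf, hA, hP, hLA => by
      refine GMin.cons (c := k) (getk k _ A) ?_ ?_
      · intro u hu
        rcases List.mem_append.mp hu with hu | hu
        · rw [List.eq_of_mem_replicate hu]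
          exact wle_nil _
        · rcases List.mem_cons.mp hu with rfl | hu
          · exact wle_refl _
          · exact wle_trans (wle_of_suffix hL hsuf (by simp)) (hLA _ hu)
      · rw [setk]
        exact gmflat v' L A k hL ((List.suffix_cons x v').trans hsuf) hA hP hLA
  | [], L, [], k, hL, hsuf, hA, hP, hLA =>
      GMin.nil (by
        intro u hu
        rcases List.mem_append.mp hu with hu | hu
        · exact List.eq_of_mem_replicate hu
        · simpa using hu)
  | [], L, B :: A', k, hL, hsuf, hA, hP, hLA => by
      have hstate : List.replicate k ([] : List X) ++ [] :: B :: A' =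
          List.replicate (k+1) ([] : List X) ++ B :: A' := by
        rw [List.replicate_succ' (n := k), List.append_assoc]
        rfl
      rw [hstate]
      have := gmflat B B A' (k+1) (hA _ (by simp)) (List.suffix_refl B)
        (fun p hp => hA _ (List.mem_cons_of_mem _ hp)) hP.of_cons
        (fun p hp => (List.pairwise_cons.mp hP).1 p hp)
      simpa using this
termination_by v L A k => (A.length, v.length)

theorem flatten_wle_ilv {A : List (List X)} (hA : ∀ p ∈ A, IsLyndon p)
    (hP : A.Pairwise wle) {σ : List X} (h : Ilv A σ) : wle A.flatten σ := by
  cases A with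
  | nil =>
      cases h with
      | nil _ => exact wle_refl _
      | cons hg _ => simp at hg
  | cons B A' =>
      have hg : GMin (B :: A') (B ++ A'.flatten) := by
        simpa using gmflat B B A' 0 (hA _ (by simp)) (List.suffix_refl B)
          (fun p hp => hA _ (List.mem_cons_of_mem _ hp)) hP.of_cons
          (fun p hp => (List.pairwise_cons.mp hP).1 p hp)
      simpa using gmin_le hg σ h
/-- Index of the block containing position `i`, for block sizes `lens`. -/
def blk : List ℕ → ℕ → ℕ
  | [], _ => 0
  | m :: L, i => if i < m then 0 else blk L (i - m) + 1

theorem blk_lt : ∀ (lens : List ℕ) (i : ℕ), i < lens.sum → blk lens i < lens.length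
  | [], i, h => by simp at h
  | m :: L, i, h => by
      by_cases hi : i < m
      · simp [blk, hi]
      · rw [blk, if_neg hi]
        have : i - m < L.sum := by simp at h; omega
        simpa using blk_lt L (i - m) this

theorem blk_bounds : ∀ (lens : List ℕ) (b i : ℕ), i < lens.sum → blk lens i = b →
    (lens.take b).sum ≤ i ∧ i < (lens.take (b + 1)).sum
  | [], b, i, h, _ => by simp at h
  | m :: L, b, i, h, hb => by
      by_cases hi : i < m
      · rw [blk, if_pos hi] at hb
        subst hb
        refine ⟨by simp, ?_⟩
        simp only [List.take_succ_cons, List.take_zero, List.sum_cons, List.sum_nil]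
        omega
      · rw [blk, if_neg hi] at hb
        cases b with
        | zero => omega
        | succ b' =>
            have hb' : blk L (i - m) = b' := by omega
            have hiL : i - m < L.sum := by simp at h; omega
            have h2 := blk_bounds L b' (i - m) hiL hb'
            simp only [List.take_succ_cons, List.sum_cons]
            omega

theorem blk_eq : ∀ (lens : List ℕ) (b i : ℕ),
    (lens.take b).sum ≤ i → i < (lens.take (b + 1)).sum → blk lens i = b
  | [], b, i, h1, h2 => by simp at h2
  | m :: L, 0, i, h1, h2 => by
      simp only [List.take_succ_cons, List.take_zero, List.sum_cons, List.sum_nil] at h2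
      rw [blk, if_pos (by omega)]
  | m :: L, b+1, i, h1, h2 => by
      simp only [List.take_succ_cons, List.sum_cons] at h1 h2
      rw [blk, if_neg (by omega)]
      have := blk_eq L b (i - m) (by omega) (by omega)
      omega

/-- Extract from `s` the subsequence of positions assigned (by `g`) to block `b`. -/
def extract (b : ℕ) : (ℕ → ℕ) → List X → List X
  | _, [] => []
  | g, x :: s =>
      if g 0 = b then x :: extract b (fun i => g (i + 1)) s
      else extract b (fun i => g (i + 1)) s

theorem ilv_extract : ∀ (s : List X) (g : ℕ → ℕ) (R : ℕ), (∀ i < s.length, g i < R) →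
    Ilv ((List.range R).map fun b => extract b g s) s
  | [], g, R, h => Ilv.nil (by
      intro u hu
      rcases List.mem_map.mp hu with ⟨b, _, rfl⟩
      rfl)
  | x :: s', g, R, h => by
      have hb : g 0 < R := h 0 (by simp)
      refine Ilv.cons (c := g 0) (x := x) (xs := extract (g 0) (fun i => g (i + 1)) s') ?_ ?_
      · rw [List.getElem?_map, List.getElem?_range hb]
        simp only [Option.map_some]
        rw [extract, if_pos rfl]
      · have hset : ((List.range R).map fun b => extract b g (x :: s')).set (g 0)
            (extract (g 0) (fun i => g (i + 1)) s') =
            (List.range R).map fun b => extract b (fun i => g (i + 1)) s' := by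
          apply List.ext_getElem?
          intro j
          rcases eq_or_ne j (g 0) with rfl | hj
          · rw [List.getElem?_set_self (by simpa using hb), List.getElem?_map,
              List.getElem?_range hb]
            rfl
          · rw [List.getElem?_set_ne (Ne.symm hj), List.getElem?_map, List.getElem?_map]
            by_cases hjR : j < R
            · rw [List.getElem?_range hjR]
              simp only [Option.map_some]
              rw [extract, if_neg (Ne.symm hj)]
            · have hnone : (List.range R)[j]? = none := by
                rw [List.getElem?_eq_none] <;> simpa using hjR
              rw [hnone]
              rfl
        rw [hset]
        exact ilv_extract s' (fun i => g (i + 1)) R (fun i hi => h (i + 1) (by simpa using hi))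

theorem extract_eq : ∀ (s : List X) (g : ℕ → ℕ) (b : ℕ),
    extract b g s = ((List.range s.length).filter fun j => g j = b).filterMap
      (fun j => s[j]?)
  | [], g, b => by simp [extract]
  | x :: s', g, b => by
      rw [extract]
      have hr : List.range (x :: s').length = 0 :: (List.range s'.length).map Nat.succ := by
        rw [List.length_cons, List.range_succ_eq_map]
      rw [hr]
      rw [List.filter_cons]
      by_cases h0 : g 0 = b
      · rw [if_pos h0, if_pos (decide_eq_true h0)]
        rw [List.filterMap_cons]
        simp only [List.getElem?_cons_zero]
        rw [List.filter_map, List.filterMap_map]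
        rw [extract_eq s' (fun i => g (i + 1)) b]
        simp [Function.comp_def]
      · rw [if_neg h0, if_neg (show ¬decide (g 0 = b) = true by simpa using h0)]
        rw [List.filter_map, List.filterMap_map]
        rw [extract_eq s' (fun i => g (i + 1)) b]
        simp [Function.comp_def]
omit [LinearOrder X] in
theorem fmrange : ∀ (l : List X), (List.range l.length).filterMap (fun i => l[i]?) = l
  | [] => by simp
  | x :: l => by
      rw [List.length_cons, List.range_succ_eq_map]
      rw [List.filterMap_cons]
      simp only [List.getElem?_cons_zero]
      rw [List.filterMap_map]
      have : ((fun i => (x :: l)[i]?) ∘ Nat.succ) = fun i => l[i]? := by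
        funext i; simp
      rw [this, fmrange l]

omit [LinearOrder X] in
theorem fgf : ∀ (fs : List (List X)) (b : ℕ),
    ((List.range (fs.map List.length).sum).filter fun i => blk (fs.map List.length) i = b).filterMap
      (fun i => fs.flatten[i]?) = fs.getD b []
  | [], b => by simp
  | f :: fs', b => by
      have hlens : ((f :: fs').map List.length) = f.length :: fs'.map List.length := rfl
      rw [hlens]
      rw [List.sum_cons, List.range_add, List.filter_append, List.filterMap_append]
      rw [List.filter_map, List.filterMap_map]
      have hflat : (f :: fs').flatten = f ++ fs'.flatten := rfl
      cases b with
      | zero =>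
          have hfil1 : (List.range f.length).filter
              (fun i => decide (blk (f.length :: fs'.map List.length) i = 0)) =
              List.range f.length := by
            rw [List.filter_eq_self]
            intro i hi
            rw [List.mem_range] at hi
            simp [blk, hi]
          have hfil2 : (List.range (fs'.map List.length).sum).filter
              ((fun i => decide (blk (f.length :: fs'.map List.length) i = 0)) ∘
                (fun x => f.length + x)) = [] := by
            rw [List.filter_eq_nil_iff]
            intro i _
            simp only [Function.comp_apply, decide_eq_true_eq]
            rw [blk, if_neg (by omega)]
            omega
          rw [hfil1, hfil2]
          simp only [List.filterMap_nil, List.map_nil, List.append_nil]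
          have : ∀ i ∈ List.range f.length, (f :: fs').flatten[i]? = f[i]? := by
            intro i hi
            rw [List.mem_range] at hi
            rw [hflat, List.getElem?_append, if_pos hi]
          rw [List.filterMap_congr ?_, fmrange f]
          · rfl
          · exact this
      | succ b' =>
          have hfil1 : (List.range f.length).filter
              (fun i => decide (blk (f.length :: fs'.map List.length) i = b' + 1)) = [] := by
            rw [List.filter_eq_nil_iff]
            intro i hi
            rw [List.mem_range] at hi
            simp [blk, hi]
          rw [hfil1]
          simp only [List.filterMap_nil, List.nil_append]
          have hpred : ((fun i => decide (blk (f.length :: fs'.map List.length) i = b' + 1)) ∘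
              (fun x => f.length + x)) = fun i => decide (blk (fs'.map List.length) i = b') := by
            funext i
            simp only [Function.comp_apply]
            rw [blk, if_neg (by omega), Nat.add_sub_cancel_left]
            rw [decide_eq_decide]
            omega
          have hfun : ((fun i => (f :: fs').flatten[i]?) ∘ (fun x => f.length + x)) =
              fun i => fs'.flatten[i]? := by
            funext i
            simp only [Function.comp_apply]
            rw [hflat, List.getElem?_append_right (Nat.le_add_right _ _),
              Nat.add_sub_cancel_left]
          rw [hpred, hfun, fgf fs' b']
          rfl
omit [LinearOrder X] in
theorem maprange_getD : ∀ (l : List (List X)),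
    (List.range l.length).map (fun b => l.getD b []) = l
  | [] => by simp
  | f :: l => by
      rw [List.length_cons, List.range_succ_eq_map, List.map_cons, List.map_map]
      have : ((fun b => (f :: l).getD b []) ∘ Nat.succ) = fun b => l.getD b [] := by
        funext b; simp
      rw [this, maprange_getD l]
      rfl

theorem plumb (fs : List (List X)) (w : Equiv.Perm (Fin fs.flatten.length))
    (hw : IsShuffle (fs.map List.length) w) :
    Ilv fs (List.ofFn fun j => fs.flatten.get (w.symm j)) := by
  haveI : IsAntisymm ℕ (· < ·) := ⟨fun a b h h' => absurd h' (Nat.lt_asymm h)⟩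
  have hsum : (fs.map List.length).sum = fs.flatten.length := List.length_flatten.symm
  set s : List X := List.ofFn fun j => fs.flatten.get (w.symm j) with hs
  have hslen : s.length = fs.flatten.length := List.length_ofFn
  set g : ℕ → ℕ := fun j =>
    if h : j < fs.flatten.length then blk (fs.map List.length) ((w.symm ⟨j, h⟩ : Fin _) : ℕ)
    else 0 with hg
  have hglt : ∀ i < s.length, g i < fs.length := by
    intro i hi
    rw [hslen] at hi
    rw [hg]
    simp only [dif_pos hi]
    have := blk_lt (fs.map List.length) ((w.symm ⟨i, hi⟩ : Fin _) : ℕ)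
      (by rw [hsum]; exact (w.symm ⟨i, hi⟩).isLt)
    simpa using this
  have hchar := ilv_extract s g fs.length hglt
  suffices h : ((List.range fs.length).map fun b => extract b g s) = fs by rwa [h] at hchar
  conv_rhs => rw [← maprange_getD fs]
  apply List.map_congr_left
  intro b hb
  rw [List.mem_range] at hb
  -- main computation
  rw [extract_eq, hslen]
  have hperm : (List.range fs.flatten.length).filter (fun j => g j = b) =
      ((List.range fs.flatten.length).filter (fun i => blk (fs.map List.length) i = b)).map
        (fun i => if h : i < fs.flatten.length then ((w ⟨i, h⟩ : Fin _) : ℕ) else i) := by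
    have hnd1 : ((List.range fs.flatten.length).filter (fun j => g j = b)).Pairwise (· < ·) :=
      List.Pairwise.sublist List.filter_sublist List.pairwise_lt_range
    have hnd0 : ((List.range fs.flatten.length).filter
        (fun i => blk (fs.map List.length) i = b)).Pairwise (· < ·) :=
      List.Pairwise.sublist List.filter_sublist List.pairwise_lt_range
    have hmem0 : ∀ i ∈ (List.range fs.flatten.length).filter
        (fun i => blk (fs.map List.length) i = b),
        i < fs.flatten.length ∧ blk (fs.map List.length) i = b := by
      intro i hi
      rcases List.mem_filter.mp hi with ⟨h1, h2⟩
      exact ⟨List.mem_range.mp h1, of_decide_eq_true h2⟩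
    have hnd2 : (((List.range fs.flatten.length).filter
        (fun i => blk (fs.map List.length) i = b)).map
        (fun i => if h : i < fs.flatten.length then ((w ⟨i, h⟩ : Fin _) : ℕ) else i)).Pairwise
        (· < ·) := by
      rw [List.pairwise_map]
      refine List.Pairwise.imp_of_mem ?_ hnd0
      intro i j hi hj hij
      obtain ⟨hin, hib⟩ := hmem0 _ hi
      obtain ⟨hjn, hjb⟩ := hmem0 _ hj
      have hbi := blk_bounds (fs.map List.length) b i (by rw [hsum]; exact hin) hib
      have hbj := blk_bounds (fs.map List.length) b j (by rw [hsum]; exact hjn) hjb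
      have hlt := hw b ⟨i, hin⟩ ⟨j, hjn⟩ hbi.1 hij hbj.2
      rw [dif_pos hin, dif_pos hjn]
      exact hlt
    refine List.Perm.eq_of_pairwise (fun a b _ _ h h' => absurd h' (Nat.lt_asymm h)) hnd1 hnd2 ?_
    refine List.perm_of_nodup_nodup_toFinset_eq
      (hnd1.imp fun h => Nat.ne_of_lt h) (hnd2.imp fun h => Nat.ne_of_lt h) ?_
    ext j
    simp only [List.mem_toFinset, List.mem_filter, List.mem_range, List.mem_map,
      decide_eq_true_eq]
    constructor
    · rintro ⟨hjn, hgj⟩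
      refine ⟨((w.symm ⟨j, hjn⟩ : Fin _) : ℕ), ⟨⟨(w.symm ⟨j, hjn⟩).isLt, ?_⟩, ?_⟩⟩
      · simp only [hg] at hgj
        rw [dif_pos hjn] at hgj
        exact hgj
      · rw [dif_pos (w.symm ⟨j, hjn⟩).isLt]
        rw [Fin.eta, Equiv.apply_symm_apply]
    · rintro ⟨i, ⟨hin, hib⟩, rfl⟩
      rw [dif_pos hin]
      refine ⟨(w ⟨i, hin⟩).isLt, ?_⟩
      rw [hg]
      simp only [dif_pos (w ⟨i, hin⟩).isLt]
      rw [Fin.eta, Equiv.symm_apply_apply]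
      exact hib
  rw [hperm, List.filterMap_map]
  have hcong : ∀ i ∈ (List.range fs.flatten.length).filter
      (fun i => blk (fs.map List.length) i = b),
      ((fun j => s[j]?) ∘ (fun i => if h : i < fs.flatten.length
        then ((w ⟨i, h⟩ : Fin _) : ℕ) else i)) i = fs.flatten[i]? := by
    intro i hi
    rcases List.mem_filter.mp hi with ⟨h1, _⟩
    have hin : i < fs.flatten.length := List.mem_range.mp h1
    simp only [Function.comp_apply, dif_pos hin]
    have hkey : ∀ (k : ℕ) (hk : k < fs.flatten.length),
        s[k]? = some (fs.flatten.get (w.symm ⟨k, hk⟩)) := by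
      intro k hk
      rw [hs, List.getElem?_eq_getElem (by simpa using hk), List.getElem_ofFn]
    rw [hkey _ (w ⟨i, hin⟩).isLt]
    rw [Fin.eta, Equiv.symm_apply_apply]
    rw [List.getElem?_eq_getElem hin]
    rfl
  rw [List.filterMap_congr hcong]
  have := fgf fs b
  rw [hsum] at this
  rw [this]
theorem pw_flatMap : ∀ (ps : List (List X)) (ns : List ℕ), ps.Pairwise wlt →
    ((ps.zip ns).flatMap fun pn => List.replicate pn.2 pn.1).Pairwise wle
  | [], ns, _ => by simp
  | p :: ps', ns, h => by
      cases ns with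
      | nil => simp
      | cons n ns' =>
          rw [List.zip_cons_cons, List.flatMap_cons, List.pairwise_append]
          obtain ⟨hrel, htail⟩ := List.pairwise_cons.mp h
          refine ⟨?_, pw_flatMap ps' ns' htail, ?_⟩
          · clear hrel htail
            induction n with
            | zero => simp
            | succ n ih =>
                rw [List.replicate_succ, List.pairwise_cons]
                exact ⟨fun u hu => by rw [List.eq_of_mem_replicate hu]; exact wle_refl p, ih⟩
          · intro x hx y hy
            rw [List.eq_of_mem_replicate hx]
            rcases List.mem_flatMap.mp hy with ⟨pn, hpn, hy'⟩
            rw [List.eq_of_mem_replicate hy']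
            exact wle_of_wlt (hrel _ (List.of_mem_zip hpn).1)

theorem main_result (ps : List (List X)) (ns : List ℕ)
    (hly : ∀ p ∈ ps, IsLyndon p)
    (hsorted : ps.Chain' wlt)
    (fs : List (List X))
    (hfs : fs = (ps.zip ns).flatMap fun pn => List.replicate pn.2 pn.1)
    (w : Equiv.Perm (Fin fs.flatten.length))
    (hw : IsShuffle (fs.map List.length) w) :
    ¬ wlt (List.ofFn fun j => fs.flatten.get (w.symm j)) fs.flatten := by
  have hpw : fs.Pairwise wle := by
    rw [hfs]
    exact pw_flatMap ps ns (List.isChain_iff_pairwise.mp hsorted)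
  have hlyf : ∀ p ∈ fs, IsLyndon p := by
    intro p hp
    rw [hfs] at hp
    rcases List.mem_flatMap.mp hp with ⟨pn, hpn, hp'⟩
    rw [List.eq_of_mem_replicate hp']
    exact hly _ (List.of_mem_zip hpn).1
  exact flatten_wle_ilv hlyf hpw (plumb fs w hw)
end Aux

/-- If `a = p₁^{n₁} ⋯ p_s^{n_s}` with `p₁ < ⋯ < p_s` Lyndon words of lengths
`l₁,…,l_s`, and `w` is a shuffle for the block sizes `(l₁,…,l₁,…,l_s,…,l_s)`
(each `lᵢ` repeated `nᵢ` times), then the word obtained by placing the letter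
`aᵢ` in position `w(i)` is lexicographically greater than or equal to `a`. -/
theorem shuffle_ge_of_lyndon_factorization {X : Type*} [LinearOrder X]
    (ps : List (List X)) (ns : List ℕ)
    (hly : ∀ p ∈ ps, IsLyndon p)
    (hsorted : ps.Chain' wlt)
    (hpos : ∀ n ∈ ns, 0 < n)
    (hlen : ns.length = ps.length)
    (fs : List (List X))
    (hfs : fs = (ps.zip ns).flatMap fun pn => List.replicate pn.2 pn.1)
    (w : Equiv.Perm (Fin fs.flatten.length))
    (hw : IsShuffle (fs.map List.length) w) :
    ¬ wlt (List.ofFn fun j => fs.flatten.get (w.symm j)) fs.flatten := by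
  exact main_result ps ns hly hsorted fs hfs w hw
end

section
/- For the q-shuffle power of a single Lyndon word: the sum over braid-group lifts of the block permutations of n copies of p (each lift acting on v_{p^n} via the diagonal braiding) equals the q-factorial [n]_Q! times v_{p^n}, where Q = Π_{k,l=1}^{L} q_{x_k x_l} and [n]_Q! = Π_{j=1}^{n} (1 + Q + ⋯ + Q^{j−1}). -/
/-- Action on `V^{⊗n}` (modelled as the free module on words of length `n`)
of the Matsumoto lift `T_w` of a permutation `w`, for the diagonal braiding
`σ(e_i ⊗ e_j) = q_{ij} (e_j ⊗ e_i)`: the basis word `a` is sent to the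
permuted word `a ∘ w⁻¹`, multiplied by the product of `q_{a_i a_j}` over all
inversions of `w`. -/
noncomputable def Tw {k : Type*} [Field k] {X : Type*} (q : X → X → k)
    {n : ℕ} (w : Equiv.Perm (Fin n)) (a : Fin n → X) : (Fin n → X) →₀ k :=
  (∏ ij : Fin n × Fin n,
      if (ij.1 : ℕ) < (ij.2 : ℕ) ∧ w ij.2 < w ij.1 then q (a ij.1) (a ij.2)
      else 1) •
    Finsupp.single (a ∘ ⇑w.symm) 1

section Aux
open Finset Equiv

/-- Number of inversions of a permutation of `Fin n`. -/
def invNum {n : ℕ} (σ : Equiv.Perm (Fin n)) : ℕ :=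
  ∑ ij : Fin n × Fin n, if (ij.1 : ℕ) < (ij.2 : ℕ) ∧ σ ij.2 < σ ij.1 then 1 else 0

lemma count_lt_fin (n : ℕ) (p : Fin (n + 1)) :
    (∑ x : Fin n, if (x : ℕ) < (p : ℕ) then 1 else 0) = (p : ℕ) := by
  rw [Fin.sum_univ_eq_sum_range (fun x => if x < (p : ℕ) then 1 else 0)]
  rw [← Finset.sum_filter]
  have : (Finset.range n).filter (fun x => x < (p : ℕ)) = Finset.range p := by
    ext x
    simp only [Finset.mem_filter, Finset.mem_range]
    have := p.isLt
    omega
  simp [this]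

/-- Insert `p` at position `0` of a permutation of `Fin n`. -/
noncomputable def insPerm {n : ℕ} (p : Fin (n + 1)) (e : Equiv.Perm (Fin n)) :
    Equiv.Perm (Fin (n + 1)) :=
  Equiv.ofBijective (Fin.cons p (fun i => p.succAbove (e i)))
    (Finite.injective_iff_bijective.mp (by
      intro x y hxy
      induction x using Fin.cases with
      | zero =>
        induction y using Fin.cases with
        | zero => rfl
        | succ y =>
          simp only [Fin.cons_zero, Fin.cons_succ] at hxy
          exact absurd hxy.symm (Fin.succAbove_ne p (e y))
      | succ x =>
        induction y using Fin.cases with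
        | zero =>
          simp only [Fin.cons_zero, Fin.cons_succ] at hxy
          exact absurd hxy (Fin.succAbove_ne p (e x))
        | succ y =>
          simp only [Fin.cons_succ] at hxy
          have := (Fin.succAbove_right_injective (p := p)) hxy
          rw [e.injective this]))

@[simp] lemma insPerm_zero {n : ℕ} (p : Fin (n + 1)) (e : Equiv.Perm (Fin n)) :
    insPerm p e 0 = p := rfl

@[simp] lemma insPerm_succ {n : ℕ} (p : Fin (n + 1)) (e : Equiv.Perm (Fin n)) (i : Fin n) :
    insPerm p e i.succ = p.succAbove (e i) := rfl

lemma invNum_insPerm {n : ℕ} (p : Fin (n + 1)) (e : Equiv.Perm (Fin n)) :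
    invNum (insPerm p e) = (p : ℕ) + invNum e := by
  unfold invNum
  rw [Fintype.sum_prod_type, Fin.sum_univ_succ]
  have h1 : (∑ j : Fin (n + 1),
      if ((0 : Fin (n+1)) : ℕ) < (j : ℕ) ∧ insPerm p e j < insPerm p e 0 then 1 else 0)
      = (p : ℕ) := by
    rw [Fin.sum_univ_succ]
    have hz : (if ((0 : Fin (n+1)) : ℕ) < ((0 : Fin (n+1)) : ℕ) ∧
        insPerm p e 0 < insPerm p e 0 then 1 else 0) = 0 := by simp
    rw [hz, zero_add]
    have : ∀ j : Fin n, (if ((0:Fin (n+1)) : ℕ) < (j.succ : ℕ) ∧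
        insPerm p e j.succ < insPerm p e 0 then 1 else 0) =
        (if ((e j : ℕ)) < (p : ℕ) then 1 else 0) := by
      intro j
      congr 1
      simp only [insPerm_succ, insPerm_zero, Fin.val_succ, eq_iff_iff]
      constructor
      · rintro ⟨-, h⟩
        have := (Fin.succAbove_lt_iff_castSucc_lt p (e j)).mp h
        simpa [Fin.lt_def] using this
      · intro h
        refine ⟨Nat.succ_pos _, (Fin.succAbove_lt_iff_castSucc_lt p (e j)).mpr ?_⟩
        simpa [Fin.lt_def] using h
    rw [Finset.sum_congr rfl (fun j _ => this j)]
    rw [Equiv.sum_comp e (fun x => if ((x : ℕ)) < (p : ℕ) then 1 else 0)]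
    exact count_lt_fin n p
  rw [h1]
  congr 1
  rw [Fintype.sum_prod_type]
  refine Finset.sum_congr rfl (fun i _ => ?_)
  rw [Fin.sum_univ_succ]
  simp only [Fin.val_succ, Fin.val_zero, Nat.not_lt_zero, false_and, if_false, zero_add,
    Nat.add_lt_add_iff_right]
  refine Finset.sum_congr rfl (fun j _ => ?_)
  simp [Fin.succAbove_lt_succAbove_iff]

lemma insPerm_pair_bijective (n : ℕ) :
    Function.Bijective (fun pe : Fin (n + 1) × Equiv.Perm (Fin n) => insPerm pe.1 pe.2) := by
  rw [Fintype.bijective_iff_injective_and_card]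
  constructor
  · rintro ⟨p, e⟩ ⟨p', e'⟩ h
    simp only [Prod.mk.injEq]
    have hp : p = p' := by
      have := congrArg (fun σ : Equiv.Perm (Fin (n+1)) => σ 0) h
      simpa using this
    refine ⟨hp, ?_⟩
    ext i
    have := congrArg (fun σ : Equiv.Perm (Fin (n+1)) => σ i.succ) h
    simp only [insPerm_succ, hp] at this
    exact congrArg Fin.val ((Fin.succAbove_right_injective (p := p')) this)
  · simp [Fintype.card_perm, Nat.factorial_succ]

lemma sum_pow_invNum {k : Type*} [CommRing k] (Q : k) (m : ℕ) :
    ∑ σ : Equiv.Perm (Fin m), Q ^ invNum σ =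
      ∏ j ∈ Finset.range m, ∑ i ∈ Finset.range (j + 1), Q ^ i := by
  induction m with
  | zero =>
    simp [invNum]
  | succ n ih =>
    rw [← Fintype.sum_bijective _ (insPerm_pair_bijective n)
      _ (fun σ => Q ^ invNum σ) (fun _ => rfl)]
    rw [Fintype.sum_prod_type]
    simp only [invNum_insPerm, pow_add]
    rw [Finset.prod_range_succ, ← ih]
    rw [← Finset.sum_mul_sum]
    rw [Fin.sum_univ_eq_sum_range (fun i => Q ^ i)]
    ring

lemma blk_aux1 {L u v c : ℕ} (d : ℕ) (hc : c < L) (h : u < v) : u * L + c < v * L + d :=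
  calc u * L + c < u * L + L := by omega
    _ = (u + 1) * L := by ring
    _ ≤ v * L := Nat.mul_le_mul_right L h
    _ ≤ v * L + d := Nat.le_add_right _ _

lemma blk_aux2 {L u v c d : ℕ} (hd : d < L) (h : u * L + c < v * L + d) : u ≤ v := by
  by_contra hb
  push_neg at hb
  exact absurd (blk_aux1 c hd hb) (by omega)

lemma block_lt_iff {L b b' x y s t : ℕ} (hs : s < L) (ht : t < L)
    (h1 : b = b' ↔ x = y) :
    (b * L + s < b' * L + t ∧ y * L + t < x * L + s) ↔ (b < b' ∧ y < x) := by
  constructor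
  · rintro ⟨h2, h3⟩
    have hb : b ≤ b' := blk_aux2 ht h2
    have hy : y ≤ x := blk_aux2 hs h3
    have hbne : b ≠ b' := by
      rintro rfl
      have hxy : x = y := h1.mp rfl
      subst hxy
      have hst : s < t := by omega
      have hts : t < s := by omega
      omega
    have hyne : y ≠ x := by
      intro hyx
      exact hbne (h1.mpr hyx.symm)
    exact ⟨lt_of_le_of_ne hb hbne, lt_of_le_of_ne hy hyne⟩
  · rintro ⟨h2, h3⟩
    exact ⟨blk_aux1 t hs h2, blk_aux1 s ht h3⟩

/-- The block equivalence `Fin m × Fin L ≃ Fin (m * L)`, `(b, s) ↦ b * L + s`. -/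
def blkE (m L : ℕ) (hL : 0 < L) : Fin m × Fin L ≃ Fin (m * L) where
  toFun x := ⟨(x.1 : ℕ) * L + (x.2 : ℕ),
    calc (x.1 : ℕ) * L + (x.2 : ℕ) < (x.1 : ℕ) * L + L := by omega
      _ = ((x.1 : ℕ) + 1) * L := by ring
      _ ≤ m * L := Nat.mul_le_mul_right L x.1.isLt⟩
  invFun i := (⟨(i : ℕ) / L, (Nat.div_lt_iff_lt_mul hL).mpr i.isLt⟩,
    ⟨(i : ℕ) % L, Nat.mod_lt _ hL⟩)
  left_inv := by
    rintro ⟨b, s⟩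
    have h1 : ((b : ℕ) * L + (s : ℕ)) / L = (b : ℕ) := by
      rw [mul_comm, Nat.mul_add_div hL, Nat.div_eq_of_lt s.isLt, Nat.add_zero]
    have h2 : ((b : ℕ) * L + (s : ℕ)) % L = (s : ℕ) :=
      Nat.mul_add_mod_of_lt s.isLt
    simp only [Prod.mk.injEq]
    exact ⟨Fin.ext h1, Fin.ext h2⟩
  right_inv := by
    intro i
    exact Fin.ext (Nat.div_add_mod' _ _)


end Aux

/-- The sum over all braid-group lifts of block permutations of `m` copies of a
word `p = x₁⋯x_L` (each acting on `v_{p^m}` via the diagonal braiding) equals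
`[m]_Q! • v_{p^m}`, where `Q = Π_{k,l=1}^{L} q_{x_k x_l}` and
`[m]_Q! = Π_{j=1}^{m} (1 + Q + ⋯ + Q^{j-1})`. -/
theorem sum_blockPerms_eq_qFactorial_smul {k X : Type*} [Field k]
    (q : X → X → k) (hq : ∀ i j, q i j ≠ 0)
    (L m : ℕ) (hL : 0 < L) (p : Fin L → X)
    (a : Fin (m * L) → X)
    (ha : a = fun i : Fin (m * L) => p ⟨(i : ℕ) % L, Nat.mod_lt _ hL⟩)
    (W : Equiv.Perm (Fin m) → Equiv.Perm (Fin (m * L)))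
    (hW : ∀ (τ : Equiv.Perm (Fin m)) (i : Fin (m * L)),
      ((W τ) i : ℕ) =
        (τ ⟨(i : ℕ) / L, (Nat.div_lt_iff_lt_mul hL).mpr i.isLt⟩ : ℕ) * L +
          (i : ℕ) % L) :
    ∑ τ : Equiv.Perm (Fin m), Tw q (W τ) a =
      (∏ j ∈ Finset.range m,
          ∑ i ∈ Finset.range (j + 1),
            (∏ s : Fin L, ∏ t : Fin L, q (p s) (p t)) ^ i) •
        Finsupp.single a 1 := by
  set Q : k := ∏ s : Fin L, ∏ t : Fin L, q (p s) (p t) with hQ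
  have ha' : ∀ i : Fin (m * L), a i = p ⟨(i : ℕ) % L, Nat.mod_lt _ hL⟩ := by
    intro i; rw [ha]
  -- residues are preserved by `W τ`
  have hres : ∀ (τ : Equiv.Perm (Fin m)) (i : Fin (m * L)),
      ((W τ) i : ℕ) % L = (i : ℕ) % L := by
    intro τ i
    rw [hW τ i]
    exact Nat.mul_add_mod_of_lt (Nat.mod_lt _ hL)
  have hsymm : ∀ τ : Equiv.Perm (Fin m), a ∘ ⇑(W τ).symm = a := by
    intro τ
    funext i
    have h1 : (((W τ).symm i : Fin (m * L)) : ℕ) % L = (i : ℕ) % L := by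
      conv_rhs => rw [← Equiv.apply_symm_apply (W τ) i]
      rw [hres τ ((W τ).symm i)]
    simp only [Function.comp_apply]
    rw [ha' _, ha' i]
    exact congrArg p (Fin.ext h1)
  -- the coefficient of each `Tw`
  have hcoef : ∀ τ : Equiv.Perm (Fin m),
      (∏ ij : Fin (m * L) × Fin (m * L),
        if (ij.1 : ℕ) < (ij.2 : ℕ) ∧ (W τ) ij.2 < (W τ) ij.1
        then q (a ij.1) (a ij.2) else 1) = Q ^ invNum τ := by
    intro τ
    have E := Equiv.prodCongr (blkE m L hL) (blkE m L hL)
    rw [← Equiv.prod_comp (Equiv.prodCongr (blkE m L hL) (blkE m L hL))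
      (fun ij : Fin (m * L) × Fin (m * L) =>
        if (ij.1 : ℕ) < (ij.2 : ℕ) ∧ (W τ) ij.2 < (W τ) ij.1
        then q (a ij.1) (a ij.2) else 1)]
    have hpt : ∀ x : (Fin m × Fin L) × (Fin m × Fin L),
        (fun ij : Fin (m * L) × Fin (m * L) =>
          if (ij.1 : ℕ) < (ij.2 : ℕ) ∧ (W τ) ij.2 < (W τ) ij.1
          then q (a ij.1) (a ij.2) else 1)
          ((Equiv.prodCongr (blkE m L hL) (blkE m L hL)) x) =
        (if (x.1.1 : ℕ) < (x.2.1 : ℕ) ∧ τ x.2.1 < τ x.1.1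
          then q (p x.1.2) (p x.2.2) else 1) := by
      rintro ⟨⟨b, s⟩, ⟨b', t⟩⟩
      have hib : blkE m L hL (b, s) = ⟨(b : ℕ) * L + (s : ℕ), (blkE m L hL (b, s)).isLt⟩ := rfl
      have hval : ∀ (c : Fin m) (d : Fin L),
          ((blkE m L hL (c, d)) : ℕ) = (c : ℕ) * L + (d : ℕ) := fun c d => rfl
      have hmod : ∀ (c : Fin m) (d : Fin L),
          ((blkE m L hL (c, d)) : ℕ) % L = (d : ℕ) := by
        intro c d
        rw [hval]
        exact Nat.mul_add_mod_of_lt d.isLt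
      have hdiv : ∀ (c : Fin m) (d : Fin L),
          ((blkE m L hL (c, d)) : ℕ) / L = (c : ℕ) := by
        intro c d
        rw [hval, mul_comm, Nat.mul_add_div hL, Nat.div_eq_of_lt d.isLt, Nat.add_zero]
      have haval : ∀ (c : Fin m) (d : Fin L), a (blkE m L hL (c, d)) = p d := by
        intro c d
        rw [ha' _]
        exact congrArg p (Fin.ext (hmod c d))
      have hWval : ∀ (c : Fin m) (d : Fin L),
          ((W τ) (blkE m L hL (c, d)) : ℕ) = (τ c : ℕ) * L + (d : ℕ) := by
        intro c d
        rw [hW τ _]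
        congr 2
        · exact congrArg (fun z => (τ z : ℕ)) (Fin.ext (hdiv c d))
        · exact hmod c d
      simp only [Equiv.prodCongr_apply, Prod.map]
      rw [haval b s, haval b' t]
      congr 1
      simp only [eq_iff_iff]
      have hlt1 : ((W τ) (blkE m L hL (b', t)) < (W τ) (blkE m L hL (b, s))) ↔
          ((τ b' : ℕ) * L + (t : ℕ) < (τ b : ℕ) * L + (s : ℕ)) := by
        rw [Fin.lt_def, hWval b s, hWval b' t]
      rw [hval b s, hval b' t, hlt1]
      rw [block_lt_iff s.isLt t.isLt
        (by constructor
            · intro h; rw [Fin.ext (show ((b : Fin m) : ℕ) = (b' : ℕ) from h)]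
            · intro h
              have : τ b = τ b' := Fin.ext h
              exact congrArg Fin.val (τ.injective this))]
      rw [Fin.lt_def]
    rw [Finset.prod_congr rfl (fun x _ => hpt x)]
    rw [← Equiv.prod_comp (Equiv.prodProdProdComm (Fin m) (Fin m) (Fin L) (Fin L))
      (fun x : (Fin m × Fin L) × (Fin m × Fin L) =>
        if (x.1.1 : ℕ) < (x.2.1 : ℕ) ∧ τ x.2.1 < τ x.1.1
        then q (p x.1.2) (p x.2.2) else 1)]
    rw [Fintype.prod_prod_type]
    have hinner : ∀ y : Fin m × Fin m,
        (∏ z : Fin L × Fin L,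
          if (y.1 : ℕ) < (y.2 : ℕ) ∧ τ y.2 < τ y.1 then q (p z.1) (p z.2) else 1) =
        Q ^ (if (y.1 : ℕ) < (y.2 : ℕ) ∧ τ y.2 < τ y.1 then 1 else 0) := by
      intro y
      split_ifs with h
      · rw [pow_one, hQ, Fintype.prod_prod_type]
      · simp
    calc (∏ y : Fin m × Fin m, ∏ z : Fin L × Fin L,
            (fun x : (Fin m × Fin L) × (Fin m × Fin L) =>
              if (x.1.1 : ℕ) < (x.2.1 : ℕ) ∧ τ x.2.1 < τ x.1.1
              then q (p x.1.2) (p x.2.2) else 1)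
            ((Equiv.prodProdProdComm (Fin m) (Fin m) (Fin L) (Fin L)) (y, z)))
        = ∏ y : Fin m × Fin m,
            Q ^ (if (y.1 : ℕ) < (y.2 : ℕ) ∧ τ y.2 < τ y.1 then 1 else 0) := by
          exact Finset.prod_congr rfl (fun y _ => hinner y)
      _ = Q ^ invNum τ := by
          rw [Finset.prod_pow_eq_pow_sum]
          rfl
  have hTw : ∀ τ : Equiv.Perm (Fin m),
      Tw q (W τ) a = (Q ^ invNum τ) • Finsupp.single a 1 := by
    intro τ
    unfold Tw
    rw [hsymm τ, hcoef τ]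
  rw [Finset.sum_congr rfl (fun τ _ => hTw τ), ← Finset.sum_smul, sum_pow_invNum]
end
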